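/- Let V be a finite-dimensional real inner product space, let Δ ⊆ V be a closed convex set with 0 ∈ Δ, and let ∇ := {x ∈ V | ⟨u, x⟩ ≥ −1 for all u ∈ Δ} be its polar. Let v ∈ V and suppose that the set {t ∈ ℝ | t ≥ 0 and t•v ∈ ∇} is bounded above with supremum T > 0. Then the infimum of the set {⟨u, v⟩ | u ∈ Δ} equals −1/T. -/

import Mathlib

open RealInnerProductSpace

/-- **Lemma 4.5 (pwl-characterization).** For a closed convex set `Δ ∋ 0` with polar
`∇ = {x | ⟪u, x⟫ ≥ -1 ∀ u ∈ Δ}`, if the set `{t ≥ 0 | t • v ∈ ∇}` is bounded above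
with supremum `T > 0`, then `pwl(Δ)(v) = inf {⟪u, v⟫ | u ∈ Δ} = -1/T`. -/
theorem pwl_eq_neg_inv_sup
    {V : Type*} [NormedAddCommGroup V] [InnerProductSpace ℝ V]
    [FiniteDimensional ℝ V]
    (Δ : Set V) (hcl : IsClosed Δ) (hconv : Convex ℝ Δ) (h0 : (0 : V) ∈ Δ)
    (v : V) (T : ℝ)
    (hT : IsLUB {t : ℝ | 0 ≤ t ∧ t • v ∈ {x : V | ∀ u ∈ Δ, ⟪u, x⟫ ≥ -1}} T)
    (hTpos : 0 < T) :
    sInf ((fun u => ⟪u, v⟫) '' Δ) = -1 / T := by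
  set A : Set ℝ := {t : ℝ | 0 ≤ t ∧ t • v ∈ {x : V | ∀ u ∈ Δ, ⟪u, x⟫ ≥ -1}} with hA
  set S : Set ℝ := (fun u => ⟪u, v⟫) '' Δ with hS
  have hSne : S.Nonempty := ⟨0, ⟨0, h0, (by simp : ⟪(0:V), v⟫ = 0)⟩⟩
  have h0S : (0 : ℝ) ∈ S := ⟨0, h0, (by simp : ⟪(0:V), v⟫ = 0)⟩
  -- A is closed
  have hAclosed : IsClosed A := by
    have : A = Set.Ici (0:ℝ) ∩ ⋂ u ∈ Δ, {t : ℝ | ⟪u, t • v⟫ ≥ -1} := by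
      ext t
      simp only [hA, Set.mem_setOf_eq, Set.mem_inter_iff, Set.mem_iInter]
      tauto
    rw [this]
    refine IsClosed.inter isClosed_Ici ?_
    refine isClosed_biInter fun u _ => ?_
    have : {t : ℝ | ⟪u, t • v⟫ ≥ -1} = {t : ℝ | -1 ≤ t * ⟪u, v⟫} := by
      ext t; simp [real_inner_smul_right]
    rw [this]
    exact isClosed_le continuous_const (continuous_id.mul continuous_const)
  have hAne : A.Nonempty := ⟨0, le_refl 0, by simp⟩
  have hTA : T ∈ A := hT.mem_of_isClosed hAne hAclosed
  -- lower bound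
  have hlb : ∀ x ∈ S, -1 / T ≤ x := by
    rintro x ⟨u, hu, rfl⟩
    have h1 : -1 ≤ T * ⟪u, v⟫ := by
      have := hTA.2 u hu
      rwa [real_inner_smul_right] at this
    rw [div_le_iff₀ hTpos]
    linarith [h1]
  have hbdd : BddBelow S := ⟨-1 / T, hlb⟩
  have hge : -1 / T ≤ sInf S := le_csInf hSne hlb
  refine le_antisymm ?_ hge
  by_contra hcon
  push_neg at hcon
  set m := sInf S with hm
  have hmlb : ∀ u ∈ Δ, m ≤ ⟪u, v⟫ := fun u hu => csInf_le hbdd ⟨u, hu, rfl⟩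
  have hm0 : m ≤ 0 := csInf_le hbdd h0S
  rcases lt_or_eq_of_le hm0 with hmneg | hmzero
  · -- m < 0, take t = -1/m
    have htpos : 0 < -1 / m := div_pos_of_neg_of_neg (by norm_num) hmneg
    have htA : -1 / m ∈ A := by
      refine ⟨le_of_lt htpos, fun u hu => ?_⟩
      rw [real_inner_smul_right]
      have h2 : (-1 / m) * m ≤ (-1 / m) * ⟪u, v⟫ :=
        mul_le_mul_of_nonneg_left (hmlb u hu) (le_of_lt htpos)
      have h3 : (-1 / m) * m = -1 := div_mul_cancel₀ (-1) (ne_of_lt hmneg)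
      linarith
    have hle : -1 / m ≤ T := hT.1 htA
    have : T < -1 / m := by
      rw [lt_div_iff_of_neg hmneg]
      have : -1 / T < m := hcon
      rw [div_lt_iff₀ hTpos] at this
      linarith
    linarith
  · -- m = 0
    have hnonneg : ∀ u ∈ Δ, 0 ≤ ⟪u, v⟫ := fun u hu => hmzero ▸ hmlb u hu
    have htA : T + 1 ∈ A := by
      refine ⟨by linarith, fun u hu => ?_⟩
      rw [real_inner_smul_right]
      have := hnonneg u hu
      nlinarith
    have := hT.1 htA
    linarith
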